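/- arXiv:1304.1632 — 3 statements merged into one kernel-verified Lean document; each statement's English description precedes it below -/
import Mathlib

section
/- Let P₁ = 1 + Σ_{s≥1} p_s(x) Λ^s and P₂ = Σ_{s≤0} r_s(x) Λ^s with r₀ invertible, both invertible in the appropriate rings of formal difference-operator series, and let P₁*, P₂* be operators of the analogous opposite forms (P₁* = 1 + Σ_{s≥1} Λ^s p̃_s, P₂* = Σ_{s≤0} Λ^s r̃_s with r̃₀ invertible). If P₁ Λ^{−1} P₁* = P₂ Λ^{−1} P₂*, then P₁*(x−ε) = P₁^{−1} and P₂*(x−ε) = P₂^{−1}, where P*(x−ε) denotes the operator obtained by shifting every coefficient's argument by −ε. -/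
/-!  Difference-operator formal series over a shift ring with automorphism `E`
(`Λ a(x) = a(x+ε) Λ`).  `P₁ = 1 + Σ_{s≥1} p_s(x) Λ^s` is modelled by its left
coefficients `p : ℕ → R` (`p 0 = 1`); `P₁* = 1 + Σ_{s≥1} Λ^s p̃_s` by its right
coefficients `ps : ℕ → R` (`ps 0 = 1`); `P₂ = Σ_{s≤0} r_s Λ^s` by `r : ℕ → R`
(`r n` the coefficient of `Λ^{−n}`, `r 0` invertible); `P₂* = Σ_{s≤0} Λ^s r̃_s`
by its right coefficients `rs : ℕ → R` (`rs 0` invertible). -/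

variable {R : Type*} [CommRing R]

/-- Twisted product for series in nonnegative powers of `Λ`. -/
noncomputable def tmulP (E : RingAut R) (a b : ℕ → R) : ℕ → R :=
  fun n => ∑ p ∈ Finset.HasAntidiagonal.antidiagonal n, a p.1 * (E ^ p.1) (b p.2)

/-- Twisted product for series in nonpositive powers of `Λ` (index `n`
records the coefficient of `Λ^{−n}`). -/
noncomputable def tmulN (E : RingAut R) (a b : ℕ → R) : ℕ → R :=
  fun n => ∑ p ∈ Finset.HasAntidiagonal.antidiagonal n, a p.1 * (E ^ (-(p.1 : ℤ))) (b p.2)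

/-- The identity series `1`. -/
def deltaF : ℕ → R := fun n => if n = 0 then 1 else 0

lemma RA_mul_apply (f g : RingAut R) (x : R) : (f * g) x = f (g x) := rfl
lemma RA_one_apply (x : R) : (1 : RingAut R) x = x := rfl

lemma tmulP_delta_left (E : RingAut R) (a : ℕ → R) : tmulP E deltaF a = a := by
  funext n
  rw [tmulP, Finset.sum_eq_single (0, n)]
  · simp [deltaF, RA_one_apply]
  · rintro ⟨i, j⟩ hm hne
    have hij : i + j = n := Finset.HasAntidiagonal.mem_antidiagonal.mp hm
    have : i ≠ 0 := by rintro rfl; exact hne (by simp; omega)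
    simp [deltaF, this]
  · intro hm
    exact absurd (Finset.HasAntidiagonal.mem_antidiagonal.mpr (by omega)) hm

lemma tmulP_delta_right (E : RingAut R) (a : ℕ → R) : tmulP E a deltaF = a := by
  funext n
  rw [tmulP, Finset.sum_eq_single (n, 0)]
  · simp [deltaF, RA_one_apply]
  · rintro ⟨i, j⟩ hm hne
    have hij : i + j = n := Finset.HasAntidiagonal.mem_antidiagonal.mp hm
    have : j ≠ 0 := by rintro rfl; exact hne (by simp; omega)
    simp [deltaF, this]
  · intro hm
    exact absurd (Finset.HasAntidiagonal.mem_antidiagonal.mpr (by omega)) hm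

lemma antidiagonal_triple (f : ℕ → ℕ → ℕ → R) (n : ℕ) :
    ∑ p ∈ Finset.HasAntidiagonal.antidiagonal n, ∑ q ∈ Finset.HasAntidiagonal.antidiagonal p.1, f q.1 q.2 p.2 =
    ∑ p ∈ Finset.HasAntidiagonal.antidiagonal n, ∑ q ∈ Finset.HasAntidiagonal.antidiagonal p.2, f p.1 q.1 q.2 := by
  rw [Finset.sum_sigma', Finset.sum_sigma']
  refine Finset.sum_nbij'
    (i := fun x => ⟨(x.2.1, x.2.2 + x.1.2), (x.2.2, x.1.2)⟩)
    (j := fun x => ⟨(x.1.1 + x.2.1, x.2.2), (x.1.1, x.2.1)⟩) ?_ ?_ ?_ ?_ ?_ <;>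
  · rintro ⟨⟨i, j⟩, k, l⟩ hm
    simp_all only [Finset.mem_sigma, Finset.HasAntidiagonal.mem_antidiagonal, Sigma.mk.inj_iff,
      Prod.mk.injEq, heq_eq_eq, and_true, true_and]
    try constructor
    all_goals omega

lemma tmulP_assoc (E : RingAut R) (a b c : ℕ → R) :
    tmulP E (tmulP E a b) c = tmulP E a (tmulP E b c) := by
  funext n
  simp only [tmulP, Finset.sum_mul, map_sum, Finset.mul_sum, map_mul]
  have := antidiagonal_triple (R := R)
    (fun i j k => a i * (E ^ i) (b j) * (E ^ (i + j)) (c k)) n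
  simp only [pow_add, RA_mul_apply] at this
  calc ∑ p ∈ Finset.HasAntidiagonal.antidiagonal n, ∑ q ∈ Finset.HasAntidiagonal.antidiagonal p.1,
        a q.1 * (E ^ q.1) (b q.2) * (E ^ p.1) (c p.2)
      = ∑ p ∈ Finset.HasAntidiagonal.antidiagonal n, ∑ q ∈ Finset.HasAntidiagonal.antidiagonal p.1,
        a q.1 * (E ^ q.1) (b q.2) * (E ^ q.1) ((E ^ q.2) (c p.2)) := by
        refine Finset.sum_congr rfl fun p hp => Finset.sum_congr rfl fun q hq => ?_
        have h1 : q.1 + q.2 = p.1 := Finset.HasAntidiagonal.mem_antidiagonal.mp hq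
        rw [← RA_mul_apply, ← pow_add, h1]
    _ = ∑ p ∈ Finset.HasAntidiagonal.antidiagonal n, ∑ q ∈ Finset.HasAntidiagonal.antidiagonal p.2,
        a p.1 * (E ^ p.1) (b q.1) * (E ^ p.1) ((E ^ q.1) (c q.2)) := this
    _ = ∑ p ∈ Finset.HasAntidiagonal.antidiagonal n, ∑ q ∈ Finset.HasAntidiagonal.antidiagonal p.2,
        a p.1 * ((E ^ p.1) (b q.1) * (E ^ p.1) ((E ^ q.1) (c q.2))) := by
        simp [mul_assoc]

/-- Left inverse for the twisted product, defined by strong recursion. -/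
noncomputable def linvF (E : RingAut R) (a : ℕ → R) : ℕ → R
  | 0 => Ring.inverse (a 0)
  | (n+1) =>
      -(∑ i ∈ (Finset.range (n+1)).attach,
          linvF E a i.1 * (E ^ i.1) (a (n+1-i.1))) *
        Ring.inverse ((E ^ (n+1)) (a 0))
  decreasing_by exact Finset.mem_range.mp i.2

lemma linvF_tmulP (E : RingAut R) (a : ℕ → R) (ha : IsUnit (a 0)) :
    tmulP E (linvF E a) a = deltaF := by
  funext n
  rw [tmulP, Finset.Nat.sum_antidiagonal_eq_sum_range_succ_mk]
  cases n with
  | zero => simp [linvF, deltaF, Ring.inverse_mul_cancel _ ha, RA_one_apply]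
  | succ n =>
    rw [Finset.sum_range_succ]
    have hu : IsUnit ((E ^ (n+1)) (a 0)) := ha.map (E ^ (n+1) : RingAut R)
    have : linvF E a (n+1) =
        -(∑ i ∈ Finset.range (n+1), linvF E a i * (E ^ i) (a (n+1-i))) *
          Ring.inverse ((E ^ (n+1)) (a 0)) := by
      rw [linvF, ← Finset.sum_attach (Finset.range (n+1))
        (fun i => linvF E a i * (E ^ i) (a (n+1-i)))]
    rw [this, Nat.sub_self]
    rw [neg_mul, neg_mul, mul_assoc, Ring.inverse_mul_cancel _ hu, mul_one]
    simp [deltaF]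

/-- A right inverse with unit constant term is a two-sided inverse. -/
lemma tmulP_left_of_right (E : RingAut R) (a b : ℕ → R) (ha : IsUnit (a 0))
    (hab : tmulP E a b = deltaF) : tmulP E b a = deltaF := by
  have hc : tmulP E (linvF E a) a = deltaF := linvF_tmulP E a ha
  have hbc : b = linvF E a := by
    calc b = tmulP E deltaF b := (tmulP_delta_left E b).symm
    _ = tmulP E (tmulP E (linvF E a) a) b := by rw [hc]
    _ = tmulP E (linvF E a) (tmulP E a b) := tmulP_assoc E _ _ _
    _ = linvF E a := by rw [hab, tmulP_delta_right]
  rw [hbc]; exact hc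

lemma tmulN_eq_tmulP (E : RingAut R) (a b : ℕ → R) :
    tmulN E a b = tmulP E⁻¹ a b := by
  funext n
  refine Finset.sum_congr rfl fun q hq => ?_
  congr 1
  rw [← zpow_natCast E⁻¹ q.1, inv_zpow']

/-- If `P₁ Λ^{−1} P₁* = P₂ Λ^{−1} P₂*` (equality of the coefficients of `Λ^n`
for every `n ∈ ℤ`), then `P₁*(x−ε) = P₁^{−1}` and `P₂*(x−ε) = P₂^{−1}`, where
`P*(x−ε)` shifts every coefficient's argument by `−ε` (i.e. applies `E^{−1}`). -/
theorem adjoint_is_inverse (E : RingAut R) (p ps r rs : ℕ → R)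
    (hp0 : p 0 = 1) (hps0 : ps 0 = 1) (hr0 : IsUnit (r 0)) (hrs0 : IsUnit (rs 0))
    (h : ∀ n : ℤ,
      (if -1 ≤ n then
          ∑ q ∈ Finset.HasAntidiagonal.antidiagonal (n + 1).toNat, p q.1 * (E ^ n) (ps q.2)
        else 0) =
      (if n ≤ -1 then
          ∑ q ∈ Finset.HasAntidiagonal.antidiagonal (-n - 1).toNat, r q.1 * (E ^ n) (rs q.2)
        else 0)) :
    tmulP E p (fun s => (E ^ ((s : ℤ) - 1)) (ps s)) = deltaF ∧
    tmulP E (fun s => (E ^ ((s : ℤ) - 1)) (ps s)) p = deltaF ∧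
    tmulN E r (fun t => (E ^ (-(t : ℤ) - 1)) (rs t)) = deltaF ∧
    tmulN E (fun t => (E ^ (-(t : ℤ) - 1)) (rs t)) r = deltaF := by
  have claim1 : tmulP E p (fun s => (E ^ ((s : ℤ) - 1)) (ps s)) = deltaF := by
    funext n
    cases n with
    | zero => simp [tmulP, deltaF, hp0, hps0, RA_one_apply]
    | succ n =>
      have hn := h (n : ℤ)
      rw [if_pos (by omega : (-1:ℤ) ≤ (n:ℤ)), if_neg (by omega)] at hn
      have hT : ((n : ℤ) + 1).toNat = n + 1 := by omega
      rw [hT] at hn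
      rw [tmulP]
      calc (∑ q ∈ Finset.HasAntidiagonal.antidiagonal (n+1),
            p q.1 * (E ^ q.1) ((E ^ ((q.2 : ℤ) - 1)) (ps q.2)))
          = ∑ q ∈ Finset.HasAntidiagonal.antidiagonal (n+1), p q.1 * (E ^ (n : ℤ)) (ps q.2) := by
            refine Finset.sum_congr rfl fun q hq => ?_
            have hq' : q.1 + q.2 = n + 1 := Finset.HasAntidiagonal.mem_antidiagonal.mp hq
            have he : (q.1:ℤ) + ((q.2:ℤ) - 1) = (n:ℤ) := by omega
            rw [← zpow_natCast E q.1, ← RA_mul_apply, ← zpow_add, he]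
        _ = deltaF (n+1) := by rw [hn]; simp [deltaF]
  have claim3 : tmulN E r (fun t => (E ^ (-(t : ℤ) - 1)) (rs t)) = deltaF := by
    funext n
    cases n with
    | zero =>
      have hn := h (-1)
      rw [if_pos le_rfl, if_pos le_rfl] at hn
      simp only [show ((-1:ℤ)+1).toNat = 0 by rfl, show (-(-1:ℤ)-1).toNat = 0 by rfl,
        Finset.Nat.antidiagonal_zero, Finset.sum_singleton, hp0, hps0, one_mul,
        map_one] at hn
      simp only [tmulN, Finset.Nat.antidiagonal_zero, Finset.sum_singleton]
      simpa [deltaF, RA_one_apply] using hn.symm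
    | succ n =>
      have hn := h (-(n : ℤ) - 2)
      rw [if_neg (by omega), if_pos (by omega)] at hn
      have hT : (-(-(n:ℤ) - 2) - 1).toNat = n + 1 := by omega
      rw [hT] at hn
      rw [tmulN]
      calc (∑ q ∈ Finset.HasAntidiagonal.antidiagonal (n+1),
            r q.1 * (E ^ (-(q.1 : ℤ))) ((E ^ (-(q.2 : ℤ) - 1)) (rs q.2)))
          = ∑ q ∈ Finset.HasAntidiagonal.antidiagonal (n+1), r q.1 * (E ^ (-(n:ℤ) - 2)) (rs q.2) := by
            refine Finset.sum_congr rfl fun q hq => ?_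
            have hq' : q.1 + q.2 = n + 1 := Finset.HasAntidiagonal.mem_antidiagonal.mp hq
            have he : -(q.1:ℤ) + (-(q.2:ℤ) - 1) = -(n:ℤ) - 2 := by omega
            rw [← RA_mul_apply, ← zpow_add, he]
        _ = deltaF (n+1) := by rw [← hn]; simp [deltaF]
  have hpu : IsUnit (p 0) := by rw [hp0]; exact isUnit_one
  have claim2 := tmulP_left_of_right E p _ hpu claim1
  have claim3' : tmulP E⁻¹ r (fun t => (E ^ (-(t : ℤ) - 1)) (rs t)) = deltaF := by
    rw [← tmulN_eq_tmulP]; exact claim3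
  have claim4 : tmulN E (fun t => (E ^ (-(t : ℤ) - 1)) (rs t)) r = deltaF := by
    rw [tmulN_eq_tmulP]
    exact tmulP_left_of_right E⁻¹ r _ hr0 claim3'
  exact ⟨claim1, claim2, claim3, claim4⟩
end

section
/- Let k, m ≥ 1 and Q ≠ 0. Suppose P₁ = 1 + Σ_{s≥1} p_s(x) Λ^s and P₂ = Σ_{s≤0} r_s(x) Λ^s (r₀ invertible) are invertible difference-operator series satisfying P₁ Λ^{−k} P₁^{−1} = P₂ (QΛ)^{m} P₂^{−1} =: L. Then L is a difference operator with finitely many terms, of the form L = Λ^{−k} + u_{−k+1}(x) Λ^{−k+1} + ··· + u_m(x) Λ^m, with top coefficient u_m = Q^m · r₀(x)/r₀(x+εm). -/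
/-!  Difference-operator formal series over a shift ring with automorphism `E`
(`Λ a(x) = a(x+ε) Λ`).  `P₁ = 1 + Σ_{s≥1} p_s(x) Λ^s` is modelled by its
coefficients `p : ℕ → R` with inverse `p'`; `P₂ = Σ_{s≤0} r_s(x) Λ^s` by
`r : ℕ → R` (`r n` the coefficient of `Λ^{−n}`, `r 0` invertible) with inverse
`r'`; `Q` is a constant (`E Q = Q`) nonzero parameter. -/

variable {R : Type*} [CommRing R]

/-- Coefficient of `Λ^s` in `P₁ Λ^{−k} P₁^{−1}` (supported in degrees `s ≥ −k`). -/
noncomputable def dressOne (E : RingAut R) (k : ℕ) (p p' : ℕ → R) (s : ℤ) : R :=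
  if -(k : ℤ) ≤ s then
    ∑ q ∈ Finset.HasAntidiagonal.antidiagonal (s + k).toNat, p q.1 * (E ^ ((q.1 : ℤ) - k)) (p' q.2)
  else 0

/-- Coefficient of `Λ^s` in `P₂ (QΛ)^m P₂^{−1}` (supported in degrees `s ≤ m`),
for a constant `Q`. -/
noncomputable def dressTwo (E : RingAut R) (m : ℕ) (Q : R) (r r' : ℕ → R) (s : ℤ) : R :=
  if s ≤ (m : ℤ) then
    ∑ q ∈ Finset.HasAntidiagonal.antidiagonal ((m : ℤ) - s).toNat,
      r q.1 * Q ^ m * (E ^ ((m : ℤ) - q.1)) (r' q.2)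
  else 0

/-- If `P₁ Λ^{−k} P₁^{−1} = P₂ (QΛ)^m P₂^{−1} =: L`, then `L` is a difference
operator with finitely many terms, `L = Λ^{−k} + u_{−k+1} Λ^{−k+1} + ⋯ + u_m Λ^m`,
with top coefficient `u_m = Q^m · r₀(x)/r₀(x+εm)`. -/
theorem lax_operator_form (E : RingAut R) (k m : ℕ) (hk : 1 ≤ k) (hm : 1 ≤ m)
    (Q : R) (hQ : Q ≠ 0) (hEQ : E Q = Q) (p p' r r' : ℕ → R)
    (hp0 : p 0 = 1) (hpp' : tmulP E p p' = deltaF) (hp'p : tmulP E p' p = deltaF)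
    (hr0 : IsUnit (r 0)) (hrr' : tmulN E r r' = deltaF) (hr'r : tmulN E r' r = deltaF)
    (h : ∀ s : ℤ, dressOne E k p p' s = dressTwo E m Q r r' s) :
    dressOne E k p p' (-(k : ℤ)) = 1 ∧
    (∀ s : ℤ, (m : ℤ) < s → dressOne E k p p' s = 0) ∧
    (∀ s : ℤ, s < -(k : ℤ) → dressTwo E m Q r r' s = 0) ∧
    dressOne E k p p' (m : ℤ) * (E ^ (m : ℤ)) (r 0) = Q ^ m * r 0 := by
  have hp'0 : p' 0 = 1 := by
    have := congrFun hpp' 0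
    simpa [tmulP, deltaF, hp0] using this
  have hr'0 : r' 0 * r 0 = 1 := by
    have := congrFun hr'r 0
    simpa [tmulN, deltaF, show ∀ x, (RingEquiv.symm (1 : RingAut R)) x = x from fun _ => rfl] using this
  refine ⟨?_, ?_, ?_, ?_⟩
  · simp [dressOne, hp0, hp'0]
  · intro s hs
    rw [h s]
    simp [dressTwo, not_le.mpr hs]
  · intro s hs
    rw [← h s]
    simp [dressOne, not_le.mpr hs]
  · rw [h]
    have h0 : ((m : ℤ) - m).toNat = 0 := by simp
    simp only [dressTwo, le_refl, if_true, h0, Finset.HasAntidiagonal.antidiagonal_zero,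
      Finset.sum_singleton]
    simp only [Nat.cast_zero, sub_zero]
    rw [mul_assoc, mul_assoc, ← map_mul]
    simp [hr'0, mul_comm]
end

section
/- Let R be a commutative shift ring and suppose W₁, W₂, W₁*, W₂* are invertible difference-operator series (of the appropriate triangular forms) satisfying (i) W₁ Λ^{−1} W₁* = Q W₂ (QΛ)^{−1} W₂* and (ii) (∂_t W₁) W₁^{−1} = (∂_t W₂) W₂^{−1} for a derivation ∂_t of R commuting with the shift, where W₁*, W₂* evolve by the corresponding adjoint equations so that ∂_t(W₁ Λ^{−1} W₁*) and ∂_t(W₂ (QΛ)^{−1} W₂*) are computed by the Leibniz rule with ∂_t W_i* determined by ∂_t(W_i^{−1}). Then for every n ≥ 1, (∂_t^n W₁) Λ^{−1} W₁* = Q (∂_t^n W₂) (QΛ)^{−1} W₂*. -/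
/-- Induction step from the Sato–Wilson equations to the bilinear identity.
In the (noncommutative) ring of difference-operator series, let `W₁, W₂` be
invertible wave operators with inverses `V₁, V₂`, let `M = Λ^{−1}W₁*` and
`N = (QΛ)^{−1}W₂*`, and let `D = ∂_t` be a derivation (acting coefficient-wise
and commuting with the shift).  Assume: (i) `W₁ M = Q W₂ N`; (ii)
`(D W₁) W₁^{−1} = (D W₂) W₂^{−1}`; and the adjoint evolutions
`D M = −W₁^{−1}(D W₁) M`, `D N = −W₂^{−1}(D W₂) N` (so `D` of the bilinear
products is computed by the Leibniz rule with `D W_i*` determined by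
`D(W_i^{−1})`); `Q` is a central constant.  Then for every `n ≥ 1`,
`(Dⁿ W₁) M = Q (Dⁿ W₂) N`. -/
theorem higher_derivatives_bilinear {A : Type*} [Ring A]
    (D : A → A) (hDadd : ∀ a b : A, D (a + b) = D a + D b)
    (hDmul : ∀ a b : A, D (a * b) = D a * b + a * D b)
    (Q W₁ W₂ V₁ V₂ M N : A)
    (hQc : ∀ a : A, Q * a = a * Q) (hDQ : D Q = 0)
    (hW₁V₁ : W₁ * V₁ = 1) (hV₁W₁ : V₁ * W₁ = 1)
    (hW₂V₂ : W₂ * V₂ = 1) (hV₂W₂ : V₂ * W₂ = 1)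
    (hbil : W₁ * M = Q * (W₂ * N))
    (hsato : D W₁ * V₁ = D W₂ * V₂)
    (hM : D M = -(V₁ * D W₁ * M))
    (hN : D N = -(V₂ * D W₂ * N)) :
    ∀ n : ℕ, 1 ≤ n → (D^[n] W₁) * M = Q * ((D^[n] W₂) * N) := by
  have hDW₁ : D W₁ = (D W₁ * V₁) * W₁ := by
    rw [mul_assoc, hV₁W₁, mul_one]
  have hDW₂ : D W₂ = (D W₁ * V₁) * W₂ := by
    rw [hsato, mul_assoc, hV₂W₂, mul_one]
  have key : ∀ n : ℕ, ∃ T : A, D^[n] W₁ = T * W₁ ∧ D^[n] W₂ = T * W₂ := by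
    intro n
    induction n with
    | zero => exact ⟨1, by simp, by simp⟩
    | succ n ih =>
      obtain ⟨T, h1, h2⟩ := ih
      refine ⟨D T + T * (D W₁ * V₁), ?_, ?_⟩
      · rw [Function.iterate_succ_apply', h1, hDmul, add_mul]
        congr 1
        rw [mul_assoc, mul_assoc, hV₁W₁, mul_one]
      · rw [Function.iterate_succ_apply', h2, hDmul, add_mul]
        congr 1
        rw [hsato, mul_assoc, mul_assoc, hV₂W₂, mul_one]
  intro n _
  obtain ⟨T, h1, h2⟩ := key n
  rw [h1, h2, mul_assoc, hbil, ← mul_assoc, ← hQc, mul_assoc, mul_assoc]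
end
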